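/- arXiv:2505.04933 — 3 statements merged into one kernel-verified Lean document; each statement's English description precedes it below -/
import Mathlib

section
/- Let U be a finite index set and n a positive integer. For each u ∈ U let R_u and D_u be n×n complex Hermitian positive semidefinite matrices, and let σ > 0 be a real number. Set C_u = R_u + σ·I and C_{u,all} = R_u + D_u + σ·I; both are Hermitian positive definite, hence invertible. Then Σ_{u∈U} Re tr(R_u − R_u · C_{u,all}⁻¹ · R_u) ≥ Σ_{u∈U} Re tr(R_u − R_u · C_u⁻¹ · R_u). -/
open ComplexOrder
open scoped Matrix

lemma trace_re_nonneg_of_posSemidef {n : ℕ} {M : Matrix (Fin n) (Fin n) ℂ}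
    (h : M.PosSemidef) : 0 ≤ M.trace.re := by
  simp only [Matrix.trace, Matrix.diag, Complex.re_sum]
  refine Finset.sum_nonneg fun i _ => ?_
  have := h.re_dotProduct_nonneg (Pi.single i 1)
  simpa [dotProduct, Matrix.mulVec, Pi.single_apply, mul_comm] using this

lemma inv_sub_inv_posSemidef {n : ℕ} {A B : Matrix (Fin n) (Fin n) ℂ}
    (hA : A.PosDef) (hB : B.PosDef) (hAB : (B - A).PosSemidef) :
    (A⁻¹ - B⁻¹).PosSemidef := by
  have hAu : A * A⁻¹ = 1 := Matrix.mul_nonsing_inv _ (Matrix.isUnit_iff_isUnit_det _ |>.1 hA.isUnit)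
  have hAu' : A⁻¹ * A = 1 := Matrix.nonsing_inv_mul _ (Matrix.isUnit_iff_isUnit_det _ |>.1 hA.isUnit)
  have hBu : B * B⁻¹ = 1 := Matrix.mul_nonsing_inv _ (Matrix.isUnit_iff_isUnit_det _ |>.1 hB.isUnit)
  have hBu' : B⁻¹ * B = 1 := Matrix.nonsing_inv_mul _ (Matrix.isUnit_iff_isUnit_det _ |>.1 hB.isUnit)
  set Δ := B - A with hΔ
  have h1 : B⁻¹ * Δ * A⁻¹ = A⁻¹ - B⁻¹ := by
    rw [hΔ, Matrix.mul_sub, hBu', Matrix.sub_mul, Matrix.one_mul,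
      Matrix.mul_assoc, hAu, Matrix.mul_one]
  have h2 : A⁻¹ * Δ * B⁻¹ = A⁻¹ - B⁻¹ := by
    rw [hΔ, Matrix.mul_sub, hAu', Matrix.sub_mul, Matrix.one_mul,
      Matrix.mul_assoc, hBu, Matrix.mul_one]
  have h2' : B⁻¹ + A⁻¹ * Δ * B⁻¹ = A⁻¹ := by rw [h2]; abel
  have hherm : (Δ * B⁻¹)ᴴ = B⁻¹ * Δ := by
    rw [Matrix.conjTranspose_mul, hB.isHermitian.inv.eq, hAB.isHermitian.eq]
  have key : A⁻¹ - B⁻¹ = B⁻¹ * Δ * B⁻¹ + (Δ * B⁻¹)ᴴ * A⁻¹ * (Δ * B⁻¹) := by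
    rw [hherm]
    calc A⁻¹ - B⁻¹ = B⁻¹ * Δ * A⁻¹ := h1.symm
      _ = B⁻¹ * Δ * (B⁻¹ + A⁻¹ * Δ * B⁻¹) := by rw [h2']
      _ = B⁻¹ * Δ * B⁻¹ + B⁻¹ * Δ * A⁻¹ * (Δ * B⁻¹) := by
          rw [Matrix.mul_add]
          simp only [Matrix.mul_assoc]
  rw [key]
  have p1 := hAB.conjTranspose_mul_mul_same B⁻¹
  rw [hB.isHermitian.inv.eq] at p1
  exact p1.add (hA.inv.posSemidef.conjTranspose_mul_mul_same (Δ * B⁻¹))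

/-- Theorem 1, lower-bound part (ε_MSE ≥ ε_MSE,min), flattened matrix form:
for each user `u`, `R u` is the Hermitian PSD pilot-segment channel covariance,
`D u` the PSD sum of inter-user interference covariances, `σ` the noise-to-pilot
power ratio, `C_u = R_u + σ I`, `C_{u,all} = R_u + D_u + σ I`. -/
theorem stmt_0 {U : Type*} [Fintype U] {n : ℕ} (hn : 0 < n)
    (R D : U → Matrix (Fin n) (Fin n) ℂ)
    (hR : ∀ u, (R u).PosSemidef) (hD : ∀ u, (D u).PosSemidef)
    (σ : ℝ) (hσ : 0 < σ) :
    ∑ u : U, (Matrix.trace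
        (R u - R u * (R u + D u + (σ : ℂ) • (1 : Matrix (Fin n) (Fin n) ℂ))⁻¹ * R u)).re
      ≥ ∑ u : U, (Matrix.trace
        (R u - R u * (R u + (σ : ℂ) • (1 : Matrix (Fin n) (Fin n) ℂ))⁻¹ * R u)).re := by
  apply Finset.sum_le_sum
  intro u _
  set A := R u + (σ : ℂ) • (1 : Matrix (Fin n) (Fin n) ℂ) with hAdef
  set B := R u + D u + (σ : ℂ) • (1 : Matrix (Fin n) (Fin n) ℂ) with hBdef
  have hsmul : ((σ : ℂ) • (1 : Matrix (Fin n) (Fin n) ℂ)).PosDef := by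
    have heq : (σ : ℂ) • (1 : Matrix (Fin n) (Fin n) ℂ)
        = Matrix.diagonal (fun _ => (σ : ℂ)) := by
      ext i j
      by_cases hij : i = j <;> simp [Matrix.one_apply, Matrix.diagonal_apply, hij]
    rw [heq]
    exact Matrix.PosDef.diagonal fun i => Complex.zero_lt_real.2 hσ
  have hApd : A.PosDef := Matrix.PosDef.posSemidef_add (hR u) hsmul
  have hBpd : B.PosDef := Matrix.PosDef.posSemidef_add ((hR u).add (hD u)) hsmul
  have hBA : (B - A).PosSemidef := by
    have : B - A = D u := by rw [hAdef, hBdef]; abel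
    rw [this]; exact hD u
  have hdiff : (A⁻¹ - B⁻¹).PosSemidef := inv_sub_inv_posSemidef hApd hBpd hBA
  have hM : ((R u)ᴴ * (A⁻¹ - B⁻¹) * R u).PosSemidef := hdiff.conjTranspose_mul_mul_same (R u)
  rw [(hR u).isHermitian.eq] at hM
  have htr := trace_re_nonneg_of_posSemidef hM
  have hexp : (R u) * (A⁻¹ - B⁻¹) * (R u)
      = (R u - R u * B⁻¹ * R u) - (R u - R u * A⁻¹ * R u) := by
    rw [Matrix.mul_sub, Matrix.sub_mul]; abel
  rw [hexp, Matrix.trace_sub, Complex.sub_re, sub_nonneg] at htr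
  exact htr
end

section
/- Let K ≥ 1 and F_τ ≥ 1 be integers, N_τ = F_τ·K, and let k0, Δ be integers. Define the K×N_τ complex matrix V^f with entries [V^f]_{k,b} = exp(−2πi·(k0+k)·b/N_τ) for k ∈ {0,…,K−1}, b ∈ {0,…,N_τ−1}, and the K×K diagonal matrix X with diagonal entries [X]_{k,k} = exp(−2πi·(k0+k)·Δ/K). Then X·V^f = V^f·Γ_{N_τ, −Δ·F_τ}, where Γ_{N,g} is the N×N cyclic-shift permutation matrix whose (l,a) entry equals 1 if a ≡ l+g (mod N) and 0 otherwise. -/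
/-- The cyclic-shift matrix `Γ_{N,g}`: its `(l,a)` entry is `1` iff `a ≡ l + g (mod N)`. -/
noncomputable def Gamma (N : ℕ) (g : ℤ) : Matrix (Fin N) (Fin N) ℂ :=
  Matrix.of fun l a =>
    if ((a : ℕ) : ZMod N) = ((l : ℕ) : ZMod N) + (g : ZMod N) then 1 else 0

/-- Structural identity `X^f_{u,u'} V^f = V^f Γ_{N_τ, −Δ F_τ}`: the frequency-domain
phase-shift diagonal matrix commutes past the partial-DFT frequency beam matrix `V^f`
at the cost of a cyclic shift of its columns. -/
theorem stmt_7 (K Fτ : ℕ) (hK : 1 ≤ K) (hFτ : 1 ≤ Fτ) (k0 Δ : ℤ) :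
    (Matrix.diagonal fun k : Fin K =>
        Complex.exp (-2 * (Real.pi : ℂ) * Complex.I *
          (((k0 + (k : ℕ)) * Δ : ℤ) : ℂ) / (K : ℂ))) *
      (Matrix.of fun (k : Fin K) (b : Fin (Fτ * K)) =>
        Complex.exp (-2 * (Real.pi : ℂ) * Complex.I *
          (((k0 + (k : ℕ)) * (b : ℕ) : ℤ) : ℂ) / ((Fτ * K : ℕ) : ℂ)))
    = (Matrix.of fun (k : Fin K) (b : Fin (Fτ * K)) =>
        Complex.exp (-2 * (Real.pi : ℂ) * Complex.I *
          (((k0 + (k : ℕ)) * (b : ℕ) : ℤ) : ℂ) / ((Fτ * K : ℕ) : ℂ)))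
      * Gamma (Fτ * K) (-(Δ * Fτ)) := by
  have hKpos : 0 < K := hK
  have hN : 0 < Fτ * K := Nat.mul_pos hFτ hK
  haveI : NeZero (Fτ * K) := ⟨hN.ne'⟩
  have hNC : ((Fτ * K : ℕ) : ℂ) ≠ 0 := Nat.cast_ne_zero.mpr hN.ne'
  have hKC : (K : ℂ) ≠ 0 := Nat.cast_ne_zero.mpr hKpos.ne'
  have hFC : (Fτ : ℂ) ≠ 0 := Nat.cast_ne_zero.mpr (Nat.one_le_iff_ne_zero.mp hFτ)
  ext k b
  rw [Matrix.diagonal_mul, Matrix.mul_apply]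
  set c : ZMod (Fτ * K) := ((((b : ℕ) : ℤ) + Δ * Fτ : ℤ) : ZMod (Fτ * K)) with hc
  set a0 : Fin (Fτ * K) := ⟨c.val, c.val_lt⟩ with ha0
  have h1 : ((a0 : ℕ) : ZMod (Fτ * K)) = c := by
    simp only [ha0]
    rw [ZMod.natCast_val, ZMod.cast_id]
  have hcond : ∀ a : Fin (Fτ * K),
      (((b : ℕ) : ZMod (Fτ * K)) = ((a : ℕ) : ZMod (Fτ * K)) + ((-(Δ * Fτ) : ℤ) : ZMod (Fτ * K)))
        ↔ a = a0 := by
    intro a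
    constructor
    · intro h
      have h2 : ((a : ℕ) : ZMod (Fτ * K)) = c := by
        rw [hc]; push_cast at h ⊢; linear_combination -h
      have hv : (a : ℕ) = c.val := by
        have := congrArg ZMod.val h2
        rwa [ZMod.val_natCast_of_lt a.isLt] at this
      exact Fin.ext hv
    · intro h
      subst h
      rw [h1, hc]; push_cast; ring
  simp only [Gamma, Matrix.of_apply, mul_ite, mul_one, mul_zero, hcond]
  rw [Finset.sum_ite_eq' Finset.univ a0, if_pos (Finset.mem_univ a0)]
  rw [← Complex.exp_add]
  -- periodicity
  have hz : ((((a0 : ℕ) : ℤ) - (((b : ℕ) : ℤ) + Δ * Fτ) : ℤ) : ZMod (Fτ * K)) = 0 := by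
    push_cast
    rw [sub_eq_zero, h1, hc]
    push_cast; ring
  obtain ⟨t, ht0⟩ := (ZMod.intCast_zmod_eq_zero_iff_dvd _ _).mp hz
  have ht : ((a0 : ℕ) : ℤ) = ((b : ℕ) : ℤ) + Δ * Fτ + (Fτ * K : ℕ) * t := by
    push_cast at ht0 ⊢; linarith
  have hb : (((k0 + (k : ℕ)) * (a0 : ℕ) : ℤ) : ℂ)
      = (((k0 : ℂ) + (k : ℕ)) * (((b : ℕ) : ℂ) + (Δ : ℂ) * Fτ + (Fτ : ℂ) * K * t)) := by
    push_cast [ht]; ring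
  have key : -2 * (Real.pi : ℂ) * Complex.I * (((k0 + (k : ℕ)) * Δ : ℤ) : ℂ) / (K : ℂ) +
      -2 * (Real.pi : ℂ) * Complex.I * (((k0 + (k : ℕ)) * (b : ℕ) : ℤ) : ℂ) / ((Fτ * K : ℕ) : ℂ)
      = -2 * (Real.pi : ℂ) * Complex.I *
          (((k0 + (k : ℕ)) * (a0 : ℕ) : ℤ) : ℂ) / ((Fτ * K : ℕ) : ℂ) +
        (((k0 + (k : ℕ)) * t : ℤ) : ℂ) * (2 * (Real.pi : ℂ) * Complex.I) := by
    rw [hb]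
    push_cast
    field_simp
    ring
  rw [key, Complex.exp_add, Complex.exp_int_mul_two_pi_mul_I, mul_one]
end

section
/- Let M, K, N_p ≥ 1 and F_ϑ, F_τ, F_ν ≥ 1 be integers; set N_ϑ = F_ϑ M, N_τ = F_τ K, N_ν = F_ν N_p. Let W, W' : (ℤ/N_ϑ)×(ℤ/N_τ)×(ℤ/N_ν) → ℝ satisfy W(x)·W'(x) = 0 for every x. For q = (q1,q2,q3) and p = (p1,p2,p3) define Q(q,p) = W(q)·W'(p)·Σ_{r1=0}^{M−1} Σ_{r2=0}^{K−1} Σ_{r3=0}^{N_p−1} exp(−2πi·r1·(p1−q1)/N_ϑ)·exp(−2πi·r2·(p2−q2)/N_τ)·exp(2πi·r3·(q3−p3)/N_ν), where the differences are evaluated at any integer representatives (the value is independent of the choice). If p1−q1 is divisible by F_ϑ in ℤ/N_ϑ, p2−q2 is divisible by F_τ in ℤ/N_τ, and p3−q3 is divisible by F_ν in ℤ/N_ν, then Q(q,p) = 0. -/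
lemma aux_key (F M N : ℕ) (hM : 1 ≤ M) [NeZero N] (hN : N = F * M)
    (d : ZMod N) (hdiv : ((F : ℕ) : ZMod N) ∣ d) (c : ℂ)
    (hc : c = 2 * (Real.pi : ℂ) * Complex.I ∨ c = -(2 * (Real.pi : ℂ) * Complex.I)) :
    d = 0 ∨ (∑ r ∈ Finset.range M, Complex.exp (c * (r : ℂ) * ((d.val : ℕ) : ℂ) / (N : ℂ))) = 0 := by
  have hNpos : 0 < N := Nat.pos_of_ne_zero (NeZero.ne N)
  have hF : 0 < F := by
    rcases Nat.eq_zero_or_pos F with h | h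
    · subst h; simp at hN; omega
    · exact h
  have hFN : F ∣ N := ⟨M, hN⟩
  obtain ⟨x, hx⟩ := hdiv
  have hFd : F ∣ d.val := by
    rw [hx, ZMod.val_mul, Nat.dvd_mod_iff hFN]
    exact Dvd.dvd.mul_right (by rw [ZMod.val_natCast]; exact (Nat.dvd_mod_iff hFN).mpr dvd_rfl) _
  obtain ⟨e, he⟩ := hFd
  have hdval : d.val < N := ZMod.val_lt d
  have hπI : (2 * (Real.pi : ℂ) * Complex.I) ≠ 0 := by
    simp [Real.pi_ne_zero, Complex.I_ne_zero]
  have hNne : (N : ℂ) ≠ 0 := Nat.cast_ne_zero.mpr (NeZero.ne N)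
  set ζ : ℂ := Complex.exp (c * ((d.val : ℕ) : ℂ) / (N : ℂ)) with hζ
  have hsum : (∑ r ∈ Finset.range M, Complex.exp (c * (r : ℂ) * ((d.val : ℕ) : ℂ) / (N : ℂ)))
      = ∑ r ∈ Finset.range M, ζ ^ r := by
    refine Finset.sum_congr rfl ?_
    intro r _
    rw [hζ, ← Complex.exp_nat_mul]
    congr 1
    ring
  by_cases h1 : ζ = 1
  · left
    rw [hζ, Complex.exp_eq_one_iff] at h1
    obtain ⟨n, hn⟩ := h1
    have hd : ((d.val : ℤ) : ℂ) = ((n : ℂ)) * N ∨ ((d.val : ℤ) : ℂ) = ((-n : ℤ) : ℂ) * N := by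
      rcases hc with hc | hc
      · left
        rw [hc] at hn
        field_simp at hn
        push_cast
        exact mul_left_cancel₀ hπI (by linear_combination (2 * (Real.pi : ℂ) * Complex.I) * hn)
      · right
        rw [hc] at hn
        field_simp at hn
        push_cast
        exact mul_left_cancel₀ hπI (by linear_combination -(2 * (Real.pi : ℂ) * Complex.I) * hn)
    have hd' : ∃ m : ℤ, (d.val : ℤ) = m * N := by
      rcases hd with h | h
      · exact ⟨n, by exact_mod_cast h⟩
      · exact ⟨-n, by exact_mod_cast h⟩
    obtain ⟨m, hm⟩ := hd'
    have hdvd : (N : ℤ) ∣ (d.val : ℤ) := ⟨m, by linarith [hm]⟩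
    have hdvdN : N ∣ d.val := Int.ofNat_dvd.mp hdvd
    exact (ZMod.val_eq_zero d).mp (Nat.eq_zero_of_dvd_of_lt hdvdN hdval)
  · right
    rw [hsum, geom_sum_eq h1]
    have hζM : ζ ^ M = 1 := by
      rw [hζ, ← Complex.exp_nat_mul]
      have harg : (M : ℂ) * (c * ((d.val : ℕ) : ℂ) / (N : ℂ)) = c * e := by
        have hMne : (M : ℂ) ≠ 0 := Nat.cast_ne_zero.mpr (by omega)
        have hFne : (F : ℂ) ≠ 0 := Nat.cast_ne_zero.mpr (by omega)
        have hde : ((d.val : ℕ) : ℂ) = (F : ℂ) * e := by exact_mod_cast he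
        rw [hde, hN]
        push_cast
        field_simp
      rw [harg]
      rcases hc with hc | hc
      · rw [hc]
        have := Complex.exp_int_mul_two_pi_mul_I (e : ℤ)
        convert this using 2
        push_cast; ring
      · rw [hc]
        have := Complex.exp_int_mul_two_pi_mul_I (-(e : ℤ))
        convert this using 2
        push_cast; ring
    rw [hζM]
    simp

/-- Vanishing of the cross-covariance entries (51)–(53) in Appendix A of the paper:
if the triple-beam domain power distributions `W` and `W'` never overlap
(`W(x)·W'(x) = 0` for all `x`) and the index differences `p−q` are divisible by the
fine factors, then the entry
`Q(q,p) = W(q)·W'(p)·α_M((p₁−q₁)/F_ϑ)·α_K((p₂−q₂)/F_τ)·α_{N_p}((q₃−p₃)/F_ν)` vanishes.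
The differences are evaluated at the canonical representatives `ZMod.val`; the value of
each root-of-unity sum is independent of this choice. -/
theorem stmt_12 (M K Np Fϑ Fτ Fν : ℕ)
    (hM : 1 ≤ M) (hK : 1 ≤ K) (hNp : 1 ≤ Np)
    (hFϑ : 1 ≤ Fϑ) (hFτ : 1 ≤ Fτ) (hFν : 1 ≤ Fν)
    (Nϑ Nτ Nν : ℕ) [NeZero Nϑ] [NeZero Nτ] [NeZero Nν]
    (hϑ : Nϑ = Fϑ * M) (hτ : Nτ = Fτ * K) (hν : Nν = Fν * Np)
    (W W' : ZMod Nϑ × ZMod Nτ × ZMod Nν → ℝ)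
    (hWW : ∀ x, W x * W' x = 0)
    (q1 p1 : ZMod Nϑ) (q2 p2 : ZMod Nτ) (q3 p3 : ZMod Nν)
    (h1 : ((Fϑ : ℕ) : ZMod Nϑ) ∣ (p1 - q1))
    (h2 : ((Fτ : ℕ) : ZMod Nτ) ∣ (p2 - q2))
    (h3 : ((Fν : ℕ) : ZMod Nν) ∣ (p3 - q3)) :
    ((W (q1, q2, q3) : ℂ)) * ((W' (p1, p2, p3) : ℂ)) *
      ((∑ r1 ∈ Finset.range M,
          Complex.exp (-2 * (Real.pi : ℂ) * Complex.I * (r1 : ℂ) *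
            (((p1 - q1).val : ℕ) : ℂ) / (Nϑ : ℂ))) *
       (∑ r2 ∈ Finset.range K,
          Complex.exp (-2 * (Real.pi : ℂ) * Complex.I * (r2 : ℂ) *
            (((p2 - q2).val : ℕ) : ℂ) / (Nτ : ℂ))) *
       (∑ r3 ∈ Finset.range Np,
          Complex.exp (2 * (Real.pi : ℂ) * Complex.I * (r3 : ℂ) *
            (((q3 - p3).val : ℕ) : ℂ) / (Nν : ℂ)))) = 0 := by
  have h3' : ((Fν : ℕ) : ZMod Nν) ∣ (q3 - p3) := dvd_sub_comm.mp h3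
  have A := aux_key Fϑ M Nϑ hM hϑ (p1 - q1) h1 (-(2 * (Real.pi : ℂ) * Complex.I)) (Or.inr rfl)
  have B := aux_key Fτ K Nτ hK hτ (p2 - q2) h2 (-(2 * (Real.pi : ℂ) * Complex.I)) (Or.inr rfl)
  have C := aux_key Fν Np Nν hNp hν (q3 - p3) h3' (2 * (Real.pi : ℂ) * Complex.I) (Or.inl rfl)
  have e1 : (∑ r1 ∈ Finset.range M,
      Complex.exp (-2 * (Real.pi : ℂ) * Complex.I * (r1 : ℂ) * (((p1 - q1).val : ℕ) : ℂ) / (Nϑ : ℂ)))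
      = ∑ r ∈ Finset.range M,
      Complex.exp (-(2 * (Real.pi : ℂ) * Complex.I) * (r : ℂ) * (((p1 - q1).val : ℕ) : ℂ) / (Nϑ : ℂ)) :=
    Finset.sum_congr rfl fun r _ => by congr 1; ring
  have e2 : (∑ r2 ∈ Finset.range K,
      Complex.exp (-2 * (Real.pi : ℂ) * Complex.I * (r2 : ℂ) * (((p2 - q2).val : ℕ) : ℂ) / (Nτ : ℂ)))
      = ∑ r ∈ Finset.range K,
      Complex.exp (-(2 * (Real.pi : ℂ) * Complex.I) * (r : ℂ) * (((p2 - q2).val : ℕ) : ℂ) / (Nτ : ℂ)) :=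
    Finset.sum_congr rfl fun r _ => by congr 1; ring
  rw [e1, e2]
  rcases A with hA | hA
  · rcases B with hB | hB
    · rcases C with hC | hC
      · have hp1 : p1 = q1 := by rwa [sub_eq_zero] at hA
        have hp2 : p2 = q2 := by rwa [sub_eq_zero] at hB
        have hp3 : q3 = p3 := by rwa [sub_eq_zero] at hC
        subst hp1; subst hp2; subst hp3
        rw [← Complex.ofReal_mul, hWW]
        simp
      · rw [hC]; ring
    · rw [hB]; ring
  · rw [hA]; ring
end
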